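/- Let G be a compact Hausdorff topological group with normalized Haar probability measure μ, and let T : G → G be a surjective continuous group homomorphism. Suppose there exists an open normal subgroup N of G with N ≠ G and T(N) ⊆ N. Then T is not ergodic with respect to μ. -/

import Mathlib

open MeasureTheory

theorem stmt11 {G : Type*} [Group G] [TopologicalSpace G] [IsTopologicalGroup G]
    [CompactSpace G] [T2Space G] [MeasurableSpace G] [BorelSpace G]
    (μ : Measure G) [μ.IsHaarMeasure] [IsProbabilityMeasure μ]
    (T : G →* G) (hc : Continuous T) (hs : Function.Surjective T)
    (N : Subgroup G) (hN : N.Normal) (ho : IsOpen (N : Set G)) (hne : N ≠ ⊤)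
    (hTN : ⇑T '' (N : Set G) ⊆ (N : Set G)) :
    ¬ (∀ S : Set G, MeasurableSet S → ⇑T ⁻¹' S = S → μ S = 0 ∨ μ S = 1) := by
  have hfinq : Finite (G ⧸ N) := N.quotient_finite_of_isOpen ho
  have hfin : N.FiniteIndex := Subgroup.finiteIndex_of_finite_quotient (H := N)
  have hle : N ≤ N.comap T := fun x hx => hTN ⟨x, hx, rfl⟩
  have hidx : (N.comap T).index = N.index := N.index_comap_of_surjective hs
  have heq : N.comap T = N := by
    by_contra hne'
    have hlt : N < N.comap T := lt_of_le_of_ne hle (Ne.symm hne')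
    have := Subgroup.index_strictAnti hlt
    omega
  have hset : ⇑T ⁻¹' (N : Set G) = (N : Set G) := by
    rw [← Subgroup.coe_comap, heq]
  intro h
  rcases h (N : Set G) ho.measurableSet hset with h0 | h1
  · exact absurd h0 (ho.measure_pos μ ⟨1, N.one_mem⟩).ne'
  · obtain ⟨g, hg⟩ := show ∃ g, g ∉ N by simpa [Subgroup.eq_top_iff'] using hne
    set A : Set G := (fun x => g * x) ⁻¹' (N : Set G) with hA
    have hdisj : Disjoint A (N : Set G) := by
      rw [Set.disjoint_left]
      intro x hxA hxN
      exact hg (by simpa using mul_mem hxA (inv_mem hxN))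
    have hμA : μ A = μ (N : Set G) := measure_preimage_mul μ g _
    have hsum : μ A + μ (N : Set G) ≤ 1 := by
      rw [← measure_union hdisj ho.measurableSet, ← measure_univ (μ := μ)]
      exact measure_mono (Set.subset_univ _)
    rw [hμA, h1] at hsum
    exact absurd hsum (by norm_num)
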